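/- arXiv:2604.25372 — 5 statements merged into one kernel-verified Lean document; each statement's English description precedes it below -/
import Mathlib

section
/- Let φ : [0,∞) → [0,∞) be continuous, strictly increasing, with φ(0) = 0, and such that Id − φ is a class-K function (where Id(s) = s). Then there exists a class-KL function β̂ such that every non-negative real sequence (v_k)_{k≥0} satisfying v_{k+1} ≤ φ(v_k) for all k ≥ 0 obeys v_k ≤ β̂(v₀, k) for all k ≥ 0. -/
/-- A function `γ : [0,∞) → [0,∞)` is of class K if it is continuous, strictly
increasing, and `γ 0 = 0` (modelled on `ℝ` with all conditions on `Set.Ici 0`). -/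
def ClassK (γ : ℝ → ℝ) : Prop :=
  ContinuousOn γ (Set.Ici 0) ∧ StrictMonoOn γ (Set.Ici 0) ∧ γ 0 = 0

/-- Class K∞: class K and tends to infinity at infinity. -/
def ClassKInf (γ : ℝ → ℝ) : Prop :=
  ClassK γ ∧ Filter.Tendsto γ Filter.atTop Filter.atTop

/-- Class KL: `s ↦ β s t` is of class K for each `t ≥ 0`, and for each `s ≥ 0`
the map `t ↦ β s t` is decreasing on `[0,∞)` and tends to `0` at infinity. -/
def ClassKL (β : ℝ → ℝ → ℝ) : Prop :=
  (∀ t ≥ (0 : ℝ), ClassK fun s => β s t) ∧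
  ∀ s ≥ (0 : ℝ), AntitoneOn (fun t => β s t) (Set.Ici 0) ∧
    Filter.Tendsto (fun t => β s t) Filter.atTop (nhds 0)

/-- Lemma 1(i) of the paper: comparison lemma, unperturbed case. -/
theorem stmt_1 (φ : ℝ → ℝ)
    (hcont : ContinuousOn φ (Set.Ici 0)) (hmono : StrictMonoOn φ (Set.Ici 0))
    (h0 : φ 0 = 0) (hnonneg : ∀ s ≥ (0 : ℝ), 0 ≤ φ s)
    (hIdSub : ClassK fun s => s - φ s) :
    ∃ βhat : ℝ → ℝ → ℝ, ClassKL βhat ∧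
      ∀ v : ℕ → ℝ, (∀ k, 0 ≤ v k) → (∀ k, v (k + 1) ≤ φ (v k)) →
        ∀ k : ℕ, v k ≤ βhat (v 0) k := by
  classical
  -- basic facts
  have hmaps : Set.MapsTo φ (Set.Ici 0) (Set.Ici 0) := fun x hx => hnonneg x hx
  have hφle : ∀ s ≥ (0 : ℝ), φ s ≤ s := by
    intro s hs
    rcases eq_or_lt_of_le hs with h | h
    · rw [← h, h0]
    · have := hIdSub.2.1 (Set.self_mem_Ici) (le_of_lt h) h
      simp only [h0, sub_zero] at this
      linarith
  -- properties of iterates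
  have hiter_nonneg : ∀ (n : ℕ) (s : ℝ), 0 ≤ s → 0 ≤ φ^[n] s := by
    intro n
    induction n with
    | zero => intro s hs; simpa using hs
    | succ n ih =>
      intro s hs
      rw [Function.iterate_succ_apply']
      exact hnonneg _ (ih s hs)
  have hiter_maps : ∀ n : ℕ, Set.MapsTo (φ^[n]) (Set.Ici 0) (Set.Ici 0) :=
    fun n x hx => hiter_nonneg n x hx
  have hiter_cont : ∀ n : ℕ, ContinuousOn (φ^[n]) (Set.Ici 0) := by
    intro n
    induction n with
    | zero => simpa using continuousOn_id
    | succ n ih =>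
      rw [Function.iterate_succ']
      exact hcont.comp ih (hiter_maps n)
  have hiter_mono : ∀ n : ℕ, StrictMonoOn (φ^[n]) (Set.Ici 0) := by
    intro n
    induction n with
    | zero => simpa using strictMonoOn_id
    | succ n ih =>
      rw [Function.iterate_succ']
      exact hmono.comp ih (hiter_maps n)
  have hiter_zero : ∀ n : ℕ, φ^[n] (0 : ℝ) = 0 := by
    intro n
    induction n with
    | zero => simp
    | succ n ih => rw [Function.iterate_succ_apply', ih, h0]
  have hiter_anti : ∀ s ≥ (0 : ℝ), Antitone fun n : ℕ => φ^[n] s := by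
    intro s hs
    apply antitone_nat_of_succ_le
    intro n
    rw [Function.iterate_succ_apply']
    exact hφle _ (hiter_nonneg n s hs)
  -- convergence of iterates to 0
  have hiter_tendsto : ∀ s ≥ (0 : ℝ),
      Filter.Tendsto (fun n : ℕ => φ^[n] s) Filter.atTop (nhds 0) := by
    intro s hs
    have hbdd : BddBelow (Set.range fun n : ℕ => φ^[n] s) := by
      refine ⟨0, ?_⟩
      rintro x ⟨n, rfl⟩
      exact hiter_nonneg n s hs
    have htend := tendsto_atTop_ciInf (hiter_anti s hs) hbdd
    set L := ⨅ n : ℕ, φ^[n] s with hL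
    have hL0 : 0 ≤ L := le_ciInf fun n => hiter_nonneg n s hs
    -- φ L = L
    have htend' : Filter.Tendsto (fun n : ℕ => φ^[n + 1] s) Filter.atTop (nhds L) :=
      htend.comp (Filter.tendsto_add_atTop_nat 1)
    have htendW : Filter.Tendsto (fun n : ℕ => φ^[n] s) Filter.atTop
        (nhdsWithin L (Set.Ici 0)) := by
      apply tendsto_nhdsWithin_of_tendsto_nhds_of_eventually_within _ htend
      exact Filter.Eventually.of_forall fun n => hiter_nonneg n s hs
    have htendφ : Filter.Tendsto (fun n : ℕ => φ (φ^[n] s)) Filter.atTop (nhds (φ L)) :=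
      (hcont.continuousWithinAt hL0).tendsto.comp htendW
    have hfix : φ L = L := by
      apply tendsto_nhds_unique _ htend'
      simpa [Function.iterate_succ_apply'] using htendφ
    have hLzero : L = 0 := by
      by_contra h
      have hLpos : 0 < L := lt_of_le_of_ne hL0 (Ne.symm h)
      have := hIdSub.2.1 (Set.self_mem_Ici) hL0 hLpos
      simp only [h0, sub_zero] at this
      rw [hfix] at this
      linarith
    rw [hLzero] at htend
    exact htend
  -- the KL function
  refine ⟨fun s t => φ^[⌊t⌋₊] s, ⟨?_, ?_⟩, ?_⟩
  · intro t _
    exact ⟨hiter_cont _, hiter_mono _, hiter_zero _⟩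
  · intro s hs
    constructor
    · intro t1 _ t2 _ h12
      exact hiter_anti s hs (Nat.floor_le_floor h12)
    · exact (hiter_tendsto s hs).comp tendsto_nat_floor_atTop
  · intro v hv hstep k
    have key : ∀ k : ℕ, v k ≤ φ^[k] (v 0) := by
      intro k
      induction k with
      | zero => simp
      | succ k ih =>
        calc v (k + 1) ≤ φ (v k) := hstep k
          _ ≤ φ (φ^[k] (v 0)) := by
              rcases eq_or_lt_of_le ih with h | h
              · rw [h]
              · exact le_of_lt (hmono (hv k) (hiter_nonneg k _ (hv 0)) h)
          _ = φ^[k + 1] (v 0) := (Function.iterate_succ_apply' φ k (v 0)).symm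
    simpa using key k
end

section
/- Let φ : [0,∞) → [0,∞) be continuous, strictly increasing, with φ(0) = 0, and such that Id − φ is a class-K function, and let b = lim_{r→∞} (r − φ(r)) ∈ (0,∞]. Then for every ε > 0 there exists d̄(ε) > 0 such that: for every constant d with 0 ≤ d ≤ d̄(ε) and d ≤ b, every non-negative real sequence (v_k)_{k≥0} satisfying v_{k+1} ≤ φ(v_k) + d for all k ≥ 0 obeys limsup_{k→∞} v_k ≤ ε. -/
/-- Lemma 1(ii) of the paper: comparison lemma, ultimate bound. -/
theorem stmt_2 (φ : ℝ → ℝ)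
    (hcont : ContinuousOn φ (Set.Ici 0)) (hmono : StrictMonoOn φ (Set.Ici 0))
    (h0 : φ 0 = 0) (hnonneg : ∀ s ≥ (0 : ℝ), 0 ≤ φ s)
    (hIdSub : ClassK fun s => s - φ s)
    (b : EReal) (hbpos : (0 : EReal) < b)
    (hb : Filter.Tendsto (fun r : ℝ => ((r - φ r : ℝ) : EReal)) Filter.atTop (nhds b)) :
    ∀ ε : ℝ, 0 < ε → ∃ dbar : ℝ, 0 < dbar ∧
      ∀ d : ℝ, 0 ≤ d → d ≤ dbar → (d : EReal) ≤ b →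
        ∀ v : ℕ → ℝ, (∀ k, 0 ≤ v k) → (∀ k, v (k + 1) ≤ φ (v k) + d) →
          Filter.limsup v Filter.atTop ≤ ε := by
  obtain ⟨hψc, hψm, hψ0⟩ := hIdSub
  intro ε hε
  have hψε : 0 < ε - φ ε := by
    have := hψm (Set.self_mem_Ici) (Set.mem_Ici.2 hε.le) hε
    simpa [h0] using this
  refine ⟨ε - φ ε, hψε, ?_⟩
  intro d hd0 hdle _ v hvpos hvrec
  have inv : ∀ k, v k ≤ ε → v (k + 1) ≤ ε := by
    intro k hk
    have hφ : φ (v k) ≤ φ ε :=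
      hmono.monotoneOn (Set.mem_Ici.2 (hvpos k)) (Set.mem_Ici.2 hε.le) hk
    have := hvrec k
    linarith
  by_cases h : ∃ k, v k ≤ ε
  · obtain ⟨N, hN⟩ := h
    have hev : ∀ k ≥ N, v k ≤ ε := by
      intro k hk
      induction k with
      | zero => simpa [Nat.le_zero.mp hk] using hN
      | succ n ih =>
        rcases Nat.lt_or_ge N (n + 1) with h' | h'
        · exact inv n (ih (Nat.lt_succ_iff.mp h'))
        · have : N = n + 1 := le_antisymm hk h'
          simpa [← this] using hN
    refine Filter.limsup_le_of_le ?_ ?_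
    · exact Filter.isCoboundedUnder_le_of_le Filter.atTop hvpos
    · exact Filter.eventually_atTop.2 ⟨N, hev⟩
  · push_neg at h
    have hdec : ∀ k, v (k + 1) < v k := by
      intro k
      have hψ : ε - φ ε < v k - φ (v k) :=
        hψm (Set.mem_Ici.2 hε.le) (Set.mem_Ici.2 (hvpos k)) (h k)
      have := hvrec k
      linarith
    have hanti : Antitone v := antitone_nat_of_succ_le fun n => (hdec n).le
    have hbdd : BddBelow (Set.range v) := ⟨0, by rintro _ ⟨k, rfl⟩; exact hvpos k⟩
    set L := ⨅ n, v n with hL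
    have htend : Filter.Tendsto v Filter.atTop (nhds L) :=
      tendsto_atTop_ciInf hanti hbdd
    have hLε : ε ≤ L := le_ciInf fun k => (h k).le
    have hL0 : (0:ℝ) ≤ L := le_trans hε.le hLε
    have htendφ : Filter.Tendsto (fun k => φ (v k)) Filter.atTop (nhds (φ L)) := by
      have hW : Filter.Tendsto v Filter.atTop (nhdsWithin L (Set.Ici 0)) :=
        tendsto_nhdsWithin_of_tendsto_nhds_of_eventually_within v htend
          (Filter.Eventually.of_forall fun k => Set.mem_Ici.2 (hvpos k))
      exact (hcont L (Set.mem_Ici.2 hL0)).tendsto.comp hW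
    have hLle : L ≤ φ L + d := by
      have h1 : Filter.Tendsto (fun k => v (k + 1)) Filter.atTop (nhds L) :=
        htend.comp (Filter.tendsto_add_atTop_nat 1)
      have h2 : Filter.Tendsto (fun k => φ (v k) + d) Filter.atTop (nhds (φ L + d)) :=
        htendφ.add tendsto_const_nhds
      exact le_of_tendsto_of_tendsto' h1 h2 hvrec
    have hLfin : L ≤ ε := by
      by_contra hc
      push_neg at hc
      have := hψm (Set.mem_Ici.2 hε.le) (Set.mem_Ici.2 hL0) hc
      simp only at this
      linarith
    rw [htend.limsup_eq]
    exact hLfin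
end

section
/- Let f : ℝⁿ → ℝ be differentiable and β-strongly convex with β > 0, let μ > 0, and let γₙ denote the standard Gaussian measure on ℝⁿ (the n-fold product of the standard Gaussian measure N(0,1) on ℝ). Assume that for every x ∈ ℝⁿ the functions u ↦ f(x + μu) and u ↦ ∇f(x + μu) are integrable with respect to γₙ, and define the Gaussian smoothing f_μ(x) = ∫ f(x + μu) dγₙ(u). Then f_μ is β-strongly convex: for all x, y ∈ ℝⁿ, f_μ(y) ≥ f_μ(x) + ⟨∫ ∇f(x + μu) dγₙ(u), y − x⟩ + (β/2)‖y − x‖². -/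
open MeasureTheory ProbabilityTheory
open scoped RealInnerProductSpace

/-- The standard Gaussian measure on `ℝⁿ`, the `n`-fold product of `N(0,1)`. -/
noncomputable def stdGaussian (n : ℕ) : Measure (EuclideanSpace ℝ (Fin n)) :=
  Measure.map (MeasurableEquiv.toLp 2 (Fin n → ℝ))
    (Measure.pi fun _ : Fin n => gaussianReal 0 1)

/-- Gaussian smoothing preserves strong convexity (Lemma 5 of the paper). -/
theorem stmt_5 {n : ℕ} (f : EuclideanSpace ℝ (Fin n) → ℝ) (β μ : ℝ)
    (hβ : 0 < β) (hμ : 0 < μ) (hdiff : Differentiable ℝ f)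
    (hsc : ∀ x y, f y ≥ f x + ⟪gradient f x, y - x⟫ + β / 2 * ‖y - x‖ ^ 2)
    (hint : ∀ x, Integrable (fun u => f (x + μ • u)) (stdGaussian n))
    (hint' : ∀ x, Integrable (fun u => gradient f (x + μ • u)) (stdGaussian n)) :
    ∀ x y, (∫ u, f (y + μ • u) ∂(stdGaussian n)) ≥
      (∫ u, f (x + μ • u) ∂(stdGaussian n)) +
      ⟪∫ u, gradient f (x + μ • u) ∂(stdGaussian n), y - x⟫ +
      β / 2 * ‖y - x‖ ^ 2 := by
  intro x y
  have hprob : IsProbabilityMeasure (stdGaussian n) := by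
    unfold _root_.stdGaussian
    exact Measure.isProbabilityMeasure_map (MeasurableEquiv.measurable _).aemeasurable
  set ν := stdGaussian n
  have key : ∀ u, f (x + μ • u) + ⟪gradient f (x + μ • u), y - x⟫ +
      β / 2 * ‖y - x‖ ^ 2 ≤ f (y + μ • u) := by
    intro u
    have h := hsc (x + μ • u) (y + μ • u)
    have hxy : y + μ • u - (x + μ • u) = y - x := by abel
    rw [hxy] at h
    exact h
  have hinner : Integrable (fun u => ⟪gradient f (x + μ • u), y - x⟫) ν := by
    exact ((innerSL ℝ (E := EuclideanSpace ℝ (Fin n))).flip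
      (y - x)).integrable_comp (hint' x)
  have hRHS : Integrable (fun u => f (x + μ • u) + ⟪gradient f (x + μ • u), y - x⟫ +
      β / 2 * ‖y - x‖ ^ 2) ν :=
    (((hint x).add hinner).add (integrable_const _))
  have hmono := integral_mono hRHS (hint y) key
  have hsplit : ∫ u, (f (x + μ • u) + ⟪gradient f (x + μ • u), y - x⟫ +
      β / 2 * ‖y - x‖ ^ 2) ∂ν =
      (∫ u, f (x + μ • u) ∂ν) + (∫ u, ⟪gradient f (x + μ • u), y - x⟫ ∂ν) +
      β / 2 * ‖y - x‖ ^ 2 := by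
    have h1 : Integrable (fun u => f (x + μ • u) +
        ⟪gradient f (x + μ • u), y - x⟫) ν := (hint x).add hinner
    rw [integral_add h1 (integrable_const _),
      integral_add (hint x) hinner, integral_const]
    simp
  have hinner_eq : (∫ u, ⟪gradient f (x + μ • u), y - x⟫ ∂ν) =
      ⟪∫ u, gradient f (x + μ • u) ∂ν, y - x⟫ := by
    rw [real_inner_comm, ← integral_inner (hint' x)]
    simp_rw [real_inner_comm]
  rw [hsplit, hinner_eq] at hmono
  exact hmono
end

section
/- Let f : ℝⁿ → ℝ be differentiable, β-strongly convex with β > 0, with L₁-Lipschitz gradient (L₁ > 0), and let z* be its (unique) minimiser. Let h satisfy 0 < h ≤ 2/(β + L₁) and set c = 2hβL₁/(β + L₁) ∈ (0,1]. Then for every sequence (q_k)_{k∈ℕ} in ℝⁿ and every z₀ ∈ ℝⁿ, the perturbed gradient descent iterates z_{k+1} = z_k − h∇f(z_k) + q_k satisfy, for all k ≥ 1, ‖z_k − z*‖ ≤ (1 − c)^{k/2}·‖z₀ − z*‖ + (1/(1 − √(1−c)))·sup_{0≤j≤k−1} ‖q_j‖ (where when c = 1 the second term is interpreted as sup_{0≤j≤k−1}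 ‖q_j‖). -/
open scoped RealInnerProductSpace

variable {n : ℕ}

lemma lineDeriv_aux (f : EuclideanSpace ℝ (Fin n) → ℝ) (hdiff : Differentiable ℝ f)
    (x d : EuclideanSpace ℝ (Fin n)) (t : ℝ) :
    HasDerivAt (fun s : ℝ => f (x + s • d)) ⟪gradient f (x + t • d), d⟫ t := by
  have h1 : HasFDerivAt f (InnerProductSpace.toDual ℝ _ (gradient f (x + t • d))) (x + t • d) :=
    hasGradientAt_iff_hasFDerivAt.mp (hdiff _).hasGradientAt
  have h2 : HasDerivAt (fun s : ℝ => x + s • d) d t := by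
    simpa using ((hasDerivAt_id t).smul_const d).const_add x
  exact (h1.comp_hasDerivAt t h2).congr_deriv (by simp)

lemma descent_aux (f : EuclideanSpace ℝ (Fin n) → ℝ) (L₁ : ℝ) (hL₁ : 0 ≤ L₁)
    (hdiff : Differentiable ℝ f)
    (hlip : ∀ x y, ‖gradient f x - gradient f y‖ ≤ L₁ * ‖x - y‖)
    (x y : EuclideanSpace ℝ (Fin n)) :
    f y ≤ f x + ⟪gradient f x, y - x⟫ + L₁ / 2 * ‖y - x‖ ^ 2 := by
  set d := y - x with hd
  set ψ : ℝ → ℝ := fun t => f (x + t • d) - t * ⟪gradient f x, d⟫ - L₁ * t ^ 2 / 2 * ‖d‖ ^ 2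
    with hψ
  have hder : ∀ t : ℝ, HasDerivAt ψ
      (⟪gradient f (x + t • d), d⟫ - ⟪gradient f x, d⟫ - L₁ * t * ‖d‖ ^ 2) t := by
    intro t
    have h1 := lineDeriv_aux f hdiff x d t
    have h2 : HasDerivAt (fun t : ℝ => t * ⟪gradient f x, d⟫) ⟪gradient f x, d⟫ t := by
      simpa using (hasDerivAt_id t).mul_const ⟪gradient f x, d⟫
    have h3 : HasDerivAt (fun t : ℝ => L₁ * t ^ 2 / 2 * ‖d‖ ^ 2) (L₁ * t * ‖d‖ ^ 2) t := by
      have : HasDerivAt (fun t : ℝ => t ^ 2) (2 * t) t := by simpa using hasDerivAt_pow 2 t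
      have := ((this.const_mul L₁).div_const 2).mul_const (‖d‖ ^ 2)
      exact this.congr_deriv (by ring)
    exact (h1.sub h2).sub h3
  have hmono : AntitoneOn ψ (Set.Icc 0 1) := by
    apply antitoneOn_of_deriv_nonpos (convex_Icc 0 1)
    · exact fun t _ => (hder t).differentiableAt.continuousAt.continuousWithinAt
    · intro t ht
      exact (hder t).differentiableAt.differentiableWithinAt
    · intro t ht
      rw [(hder t).deriv]
      have ht0 : 0 ≤ t := (Set.mem_Ioo.mp (by rwa [interior_Icc] at ht)).1.le
      have hCS : ⟪gradient f (x + t • d) - gradient f x, d⟫ ≤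
          ‖gradient f (x + t • d) - gradient f x‖ * ‖d‖ := real_inner_le_norm _ _
      have hL : ‖gradient f (x + t • d) - gradient f x‖ ≤ L₁ * (t * ‖d‖) := by
        have := hlip (x + t • d) x
        simpa [norm_smul, abs_of_nonneg ht0] using this
      have : ⟪gradient f (x + t • d), d⟫ - ⟪gradient f x, d⟫ ≤ L₁ * t * ‖d‖ ^ 2 := by
        rw [← inner_sub_left]
        calc _ ≤ ‖gradient f (x + t • d) - gradient f x‖ * ‖d‖ := hCS
        _ ≤ L₁ * (t * ‖d‖) * ‖d‖ := by
            apply mul_le_mul_of_nonneg_right hL (norm_nonneg _)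
        _ = L₁ * t * ‖d‖ ^ 2 := by ring
      linarith
  have := hmono (Set.left_mem_Icc.mpr one_pos.le) (Set.right_mem_Icc.mpr one_pos.le) one_pos.le
  simp only [hψ] at this
  have hxy : x + (1 : ℝ) • d = y := by simp [hd]
  rw [hxy] at this
  simp only [one_pow, zero_smul, add_zero, zero_pow, zero_mul, mul_zero, sub_zero,
    one_mul, mul_one] at this
  nlinarith [this]

set_option maxHeartbeats 1000000 in
lemma coco_aux (f : EuclideanSpace ℝ (Fin n) → ℝ) (β L₁ : ℝ)
    (hβ : 0 < β) (hL₁ : 0 < L₁)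
    (hsc : ∀ x y, f y ≥ f x + ⟪gradient f x, y - x⟫ + β / 2 * ‖y - x‖ ^ 2)
    (hlip : ∀ x y, ‖gradient f x - gradient f y‖ ≤ L₁ * ‖x - y‖)
    (hdesc : ∀ x y, f y ≤ f x + ⟪gradient f x, y - x⟫ + L₁ / 2 * ‖y - x‖ ^ 2)
    (x y : EuclideanSpace ℝ (Fin n)) :
    ⟪gradient f x - gradient f y, x - y⟫ ≥
      β * L₁ / (β + L₁) * ‖x - y‖ ^ 2 + 1 / (β + L₁) * ‖gradient f x - gradient f y‖ ^ 2 := by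
  set g := gradient f with hg
  have hβL : (0:ℝ) < β + L₁ := by linarith
  have key : β * L₁ * ‖x - y‖ ^ 2 + ‖g x - g y‖ ^ 2 ≤ (β + L₁) * ⟪g x - g y, x - y⟫ := by
    set a := ‖x - y‖ with ha
    set b := ‖g x - g y‖ with hb
    set s := ⟪g x - g y, x - y⟫ with hs
    have ha0 : 0 ≤ a := norm_nonneg _
    have hb0 : 0 ≤ b := norm_nonneg _
    have hsum : s ≥ β * a ^ 2 := by
      have h1 := hsc x y
      have h2 := hsc y x
      have e1 : ‖y - x‖ = a := by rw [ha, norm_sub_rev]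
      have e2 : ⟪g x, y - x⟫ = -⟪g x, x - y⟫ := by
        rw [← inner_neg_right]; congr 1; abel
      have e3 : s = ⟪g x, x - y⟫ - ⟪g y, x - y⟫ := by rw [hs, inner_sub_left]
      rw [e1] at h1
      nlinarith [h1, h2, e2, e3]
    rcases le_or_gt L₁ β with hM | hM
    · -- degenerate case β ≥ L₁
      have hCS : s ≤ a * b := by
        calc s ≤ ‖g x - g y‖ * ‖x - y‖ := real_inner_le_norm _ _
        _ = a * b := by ring
      have hba : b ≤ L₁ * a := hlip x y
      have h1 : β * a ^ 2 ≤ a * b := le_trans hsum hCS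
      have h2 : a * b ≤ β * a ^ 2 := by nlinarith
      have h4 : s = β * a ^ 2 := le_antisymm (by linarith) hsum
      have hb2 : b ^ 2 ≤ L₁ ^ 2 * a ^ 2 := by nlinarith
      nlinarith [hb2, h4, mul_nonneg (mul_nonneg (sub_nonneg.2 hM) hβL.le) (sq_nonneg a)]
    · -- main case L₁ > β
      set M := L₁ - β with hMdef
      have hM0 : 0 < M := by rw [hMdef]; linarith
      have hMne : M ≠ 0 := ne_of_gt hM0
      set G : EuclideanSpace ℝ (Fin n) → EuclideanSpace ℝ (Fin n) :=
        fun w => g w - β • w with hG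
      have hexp : ∀ u v : EuclideanSpace ℝ (Fin n),
          ‖v‖ ^ 2 = ‖u‖ ^ 2 + 2 * ⟪u, v - u⟫ + ‖v - u‖ ^ 2 := by
        intro u v
        have h := norm_add_sq_real u (v - u)
        have huv : u + (v - u) = v := by abel
        rwa [huv] at h
      have hinG : ∀ u w : EuclideanSpace ℝ (Fin n),
          ⟪G u, w⟫ = ⟪g u, w⟫ - β * ⟪u, w⟫ := by
        intro u w
        rw [hG]
        rw [inner_sub_left, real_inner_smul_left]
      have hφl : ∀ u v : EuclideanSpace ℝ (Fin n),
          (f u - β / 2 * ‖u‖ ^ 2) + ⟪G u, v - u⟫ ≤ f v - β / 2 * ‖v‖ ^ 2 := by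
        intro u v
        have h1 := hsc u v
        have h2 : β / 2 * ‖v‖ ^ 2 =
            β / 2 * ‖u‖ ^ 2 + β * ⟪u, v - u⟫ + β / 2 * ‖v - u‖ ^ 2 := by
          rw [hexp u v]; ring
        have h3 := hinG u (v - u)
        linarith
      have hφu : ∀ u v : EuclideanSpace ℝ (Fin n),
          f v - β / 2 * ‖v‖ ^ 2 ≤
            (f u - β / 2 * ‖u‖ ^ 2) + ⟪G u, v - u⟫ + M / 2 * ‖v - u‖ ^ 2 := by
        intro u v
        have h1 := hdesc u v
        have h2 : β / 2 * ‖v‖ ^ 2 =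
            β / 2 * ‖u‖ ^ 2 + β * ⟪u, v - u⟫ + β / 2 * ‖v - u‖ ^ 2 := by
          rw [hexp u v]; ring
        have h3 := hinG u (v - u)
        rw [hMdef]
        linarith
      have step2 : ∀ u v : EuclideanSpace ℝ (Fin n),
          (f u - β / 2 * ‖u‖ ^ 2) + ⟪G u, v - u⟫ + 1 / (2 * M) * ‖G v - G u‖ ^ 2 ≤
            f v - β / 2 * ‖v‖ ^ 2 := by
        intro u v
        set w := G v - G u with hw
        set zz := v - M⁻¹ • w with hzz
        have hlower := hφl u zz
        have hupper := hφu v zz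
        have e1 : zz - v = -(M⁻¹ • w) := by rw [hzz]; abel
        have e2 : ⟪G v, zz - v⟫ = -(M⁻¹ * ⟪G v, w⟫) := by
          rw [e1, inner_neg_right, real_inner_smul_right]
        have e3 : ‖zz - v‖ ^ 2 = M⁻¹ ^ 2 * ‖w‖ ^ 2 := by
          rw [e1, norm_neg, norm_smul, Real.norm_eq_abs, abs_of_pos (inv_pos.mpr hM0)]
          ring
        have e4 : zz - u = (v - u) - M⁻¹ • w := by rw [hzz]; abel
        have e5 : ⟪G u, zz - u⟫ = ⟪G u, v - u⟫ - M⁻¹ * ⟪G u, w⟫ := by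
          rw [e4, inner_sub_right, real_inner_smul_right]
        have e6 : M⁻¹ * ⟪G v, w⟫ - M⁻¹ * ⟪G u, w⟫ = M⁻¹ * ‖w‖ ^ 2 := by
          rw [← mul_sub, ← inner_sub_left, ← hw, real_inner_self_eq_norm_sq]
        have e7 : M / 2 * (M⁻¹ ^ 2 * ‖w‖ ^ 2) = M⁻¹ * ‖w‖ ^ 2 / 2 := by
          field_simp
        have e8' : (1:ℝ) / (2 * M) = M⁻¹ / 2 := by
          field_simp
        have e8 : 1 / (2 * M) * ‖w‖ ^ 2 = M⁻¹ * ‖w‖ ^ 2 / 2 := by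
          rw [e8']; ring
        rw [e2, e3] at hupper
        rw [e5] at hlower
        linarith
      have hco : ⟪G x - G y, x - y⟫ ≥ 1 / M * ‖G x - G y‖ ^ 2 := by
        have h1 := step2 x y
        have h2 := step2 y x
        have e1 : ‖G y - G x‖ ^ 2 = ‖G x - G y‖ ^ 2 := by rw [norm_sub_rev]
        have e2 : ⟪G x - G y, x - y⟫ = -⟪G x, y - x⟫ - ⟪G y, x - y⟫ := by
          rw [inner_sub_left,
            show (y - x : EuclideanSpace ℝ (Fin n)) = -(x - y) by abel, inner_neg_right]
          ring
        have e3 : (1:ℝ) / M * ‖G x - G y‖ ^ 2 = 2 * (1 / (2 * M) * ‖G x - G y‖ ^ 2) := by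
          field_simp
        rw [e1] at h1
        linarith [h1, h2, e2, e3]
      have eGxy : G x - G y = (g x - g y) - β • (x - y) := by
        rw [hG]; simp only [smul_sub]; abel
      have eA : ⟪G x - G y, x - y⟫ = s - β * a ^ 2 := by
        rw [eGxy, inner_sub_left, real_inner_smul_left, real_inner_self_eq_norm_sq]
        try rw [hs, ha]
        try ring
      have eB : ‖G x - G y‖ ^ 2 = b ^ 2 - 2 * β * s + β ^ 2 * a ^ 2 := by
        rw [eGxy, norm_sub_sq_real, real_inner_smul_right, norm_smul, Real.norm_eq_abs,
          abs_of_pos hβ]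
        try rw [hs, hb, ha]
        try ring
      rw [eA, eB] at hco
      have hkey2 : M * (s - β * a ^ 2) ≥ b ^ 2 - 2 * β * s + β ^ 2 * a ^ 2 := by
        rw [ge_iff_le, ← sub_nonneg]
        have h0 := sub_nonneg.mpr hco
        calc (0:ℝ) ≤ M * ((s - β * a ^ 2) - 1 / M * (b ^ 2 - 2 * β * s + β ^ 2 * a ^ 2)) :=
              mul_nonneg hM0.le h0
        _ = M * (s - β * a ^ 2) - (b ^ 2 - 2 * β * s + β ^ 2 * a ^ 2) := by
              field_simp
        _ = _ := by ring
      rw [hMdef] at hkey2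
      nlinarith [hkey2]
  calc β * L₁ / (β + L₁) * ‖x - y‖ ^ 2 + 1 / (β + L₁) * ‖g x - g y‖ ^ 2
      = (β * L₁ * ‖x - y‖ ^ 2 + ‖g x - g y‖ ^ 2) / (β + L₁) := by ring
    _ ≤ ((β + L₁) * ⟪g x - g y, x - y⟫) / (β + L₁) := (div_le_div_iff_of_pos_right hβL).mpr key
    _ = ⟪g x - g y, x - y⟫ := mul_div_cancel_left₀ _ (ne_of_gt hβL)

-- gradient vanishes at the minimiser
lemma gradzero_aux (f : EuclideanSpace ℝ (Fin n) → ℝ) (hdiff : Differentiable ℝ f)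
    (zstar : EuclideanSpace ℝ (Fin n)) (hmin : ∀ x, f zstar ≤ f x) :
    gradient f zstar = 0 := by
  have hloc : IsLocalMin f zstar := Filter.Eventually.of_forall hmin
  have h1 : HasFDerivAt f (InnerProductSpace.toDual ℝ _ (gradient f zstar)) zstar :=
    hasGradientAt_iff_hasFDerivAt.mp (hdiff _).hasGradientAt
  have h2 := hloc.hasFDerivAt_eq_zero h1
  have := congrArg (InnerProductSpace.toDual ℝ (EuclideanSpace ℝ (Fin n))).symm h2
  simpa only [LinearIsometryEquiv.symm_apply_apply, map_zero] using this

-- contraction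
lemma contraction_aux (f : EuclideanSpace ℝ (Fin n) → ℝ) (β L₁ h c : ℝ)
    (hβ : 0 < β) (hL₁ : 0 < L₁)
    (hcoco : ∀ x y, ⟪gradient f x - gradient f y, x - y⟫ ≥
      β * L₁ / (β + L₁) * ‖x - y‖ ^ 2 + 1 / (β + L₁) * ‖gradient f x - gradient f y‖ ^ 2)
    (zstar : EuclideanSpace ℝ (Fin n)) (hgz : gradient f zstar = 0)
    (hh0 : 0 < h) (hh : h ≤ 2 / (β + L₁))
    (hc : c = 2 * h * β * L₁ / (β + L₁))
    (x : EuclideanSpace ℝ (Fin n)) :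
    ‖x - h • gradient f x - zstar‖ ≤ Real.sqrt (1 - c) * ‖x - zstar‖ := by
  have hβL : (0:ℝ) < β + L₁ := by linarith
  set g := gradient f with hg
  have hco := hcoco x zstar
  rw [hgz, sub_zero] at hco
  have hsq : ‖x - h • g x - zstar‖ ^ 2 ≤ (1 - c) * ‖x - zstar‖ ^ 2 := by
    have e0 : x - h • g x - zstar = (x - zstar) - h • g x := by abel
    rw [e0, norm_sub_sq_real, real_inner_smul_right, norm_smul, Real.norm_eq_abs,
      abs_of_pos hh0]
    have e1 : ⟪x - zstar, g x⟫ = ⟪g x, x - zstar⟫ := real_inner_comm _ _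
    rw [e1]
    have hbound : h * (h - 2 / (β + L₁)) * ‖g x‖ ^ 2 ≤ 0 := by
      apply mul_nonpos_of_nonpos_of_nonneg
      · apply mul_nonpos_of_nonneg_of_nonpos hh0.le; linarith
      · positivity
    have hc' : 2 * h * (β * L₁ / (β + L₁)) = c := by rw [hc]; ring
    have h2 : 2 * h * ⟪g x, x - zstar⟫ ≥
        c * ‖x - zstar‖ ^ 2 + 2 * h / (β + L₁) * ‖g x‖ ^ 2 := by
      have := mul_le_mul_of_nonneg_left hco (by linarith : (0:ℝ) ≤ 2 * h)
      calc c * ‖x - zstar‖ ^ 2 + 2 * h / (β + L₁) * ‖g x‖ ^ 2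
          = 2 * h * (β * L₁ / (β + L₁) * ‖x - zstar‖ ^ 2 + 1 / (β + L₁) * ‖g x‖ ^ 2) := by
            rw [hc]; ring
        _ ≤ 2 * h * ⟪g x, x - zstar⟫ := this
    have hb2 : h * (h - 2 / (β + L₁)) * ‖g x‖ ^ 2 =
        (h * ‖g x‖) ^ 2 - 2 * h / (β + L₁) * ‖g x‖ ^ 2 := by ring
    linarith [h2, hbound, hb2]
  have h1c : 0 ≤ 1 - c := by
    rw [hc]
    rw [sub_nonneg, div_le_one hβL]
    have hD : 2 / (β + L₁) * (β + L₁) = 2 := div_mul_cancel₀ _ (ne_of_gt hβL)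
    nlinarith [sq_nonneg (β - L₁), mul_pos hβ hL₁, hβL, hD, mul_le_mul_of_nonneg_left hh
      (by positivity : (0:ℝ) ≤ 2 * β * L₁)]
  calc ‖x - h • g x - zstar‖ = Real.sqrt (‖x - h • g x - zstar‖ ^ 2) := by
        rw [Real.sqrt_sq (norm_nonneg _)]
    _ ≤ Real.sqrt ((1 - c) * ‖x - zstar‖ ^ 2) := Real.sqrt_le_sqrt hsq
    _ = Real.sqrt (1 - c) * ‖x - zstar‖ := by
        rw [Real.sqrt_mul h1c, Real.sqrt_sq (norm_nonneg _)]

theorem stmt_6_aux {n : ℕ} (f : EuclideanSpace ℝ (Fin n) → ℝ) (β L₁ h c : ℝ)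
    (hβ : 0 < β) (hL₁ : 0 < L₁) (hdiff : Differentiable ℝ f)
    (hsc : ∀ x y, f y ≥ f x + ⟪gradient f x, y - x⟫ + β / 2 * ‖y - x‖ ^ 2)
    (hlip : ∀ x y, ‖gradient f x - gradient f y‖ ≤ L₁ * ‖x - y‖)
    (zstar : EuclideanSpace ℝ (Fin n)) (hmin : ∀ x, f zstar ≤ f x)
    (hh0 : 0 < h) (hh : h ≤ 2 / (β + L₁))
    (hc : c = 2 * h * β * L₁ / (β + L₁))
    (q z : ℕ → EuclideanSpace ℝ (Fin n))
    (hz : ∀ k, z (k + 1) = z k - h • gradient f (z k) + q k)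
    (hcontr : ∀ x : EuclideanSpace ℝ (Fin n),
      ‖x - h • gradient f x - zstar‖ ≤ Real.sqrt (1 - c) * ‖x - zstar‖)
    (h1c : 0 ≤ 1 - c) :
    ∀ k : ℕ, ∀ _hk : 1 ≤ k,
      ‖z k - zstar‖ ≤ (1 - c) ^ ((k : ℝ) / 2) * ‖z 0 - zstar‖ +
        1 / (1 - Real.sqrt (1 - c)) *
          (Finset.range k).sup' (Finset.nonempty_range_iff.mpr (Nat.pos_iff_ne_zero.mp (Nat.lt_of_lt_of_le Nat.zero_lt_one _hk)))
            (fun j => ‖q j‖) := by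
  have hβL : (0:ℝ) < β + L₁ := by linarith
  set r := Real.sqrt (1 - c) with hr
  have hr0 : 0 ≤ r := Real.sqrt_nonneg _
  have hc0 : 0 < c := by rw [hc]; positivity
  have hr1 : r < 1 := by
    rw [hr]
    calc Real.sqrt (1 - c) < Real.sqrt 1 := by
          apply Real.sqrt_lt_sqrt h1c; linarith
    _ = 1 := Real.sqrt_one
  have hrec : ∀ k, ‖z (k + 1) - zstar‖ ≤ r * ‖z k - zstar‖ + ‖q k‖ := by
    intro k
    rw [hz k]
    have e0 : z k - h • gradient f (z k) + q k - zstar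
        = (z k - h • gradient f (z k) - zstar) + q k := by abel
    rw [e0]
    calc ‖(z k - h • gradient f (z k) - zstar) + q k‖
        ≤ ‖z k - h • gradient f (z k) - zstar‖ + ‖q k‖ := norm_add_le _ _
      _ ≤ r * ‖z k - zstar‖ + ‖q k‖ := by
          exact add_le_add_left (hcontr (z k)) _
  have hind : ∀ k, ‖z k - zstar‖ ≤
      r ^ k * ‖z 0 - zstar‖ + ∑ j ∈ Finset.range k, r ^ (k - 1 - j) * ‖q j‖ := by
    intro k
    induction k with
    | zero => simp
    | succ k ih =>
      calc ‖z (k + 1) - zstar‖ ≤ r * ‖z k - zstar‖ + ‖q k‖ := hrec k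
        _ ≤ r * (r ^ k * ‖z 0 - zstar‖ + ∑ j ∈ Finset.range k, r ^ (k - 1 - j) * ‖q j‖)
            + ‖q k‖ := by
            exact add_le_add_left (mul_le_mul_of_nonneg_left ih hr0) _
        _ = r ^ (k + 1) * ‖z 0 - zstar‖
            + (∑ j ∈ Finset.range k, r ^ (k - j) * ‖q j‖ + ‖q k‖) := by
            have hS : r * ∑ j ∈ Finset.range k, r ^ (k - 1 - j) * ‖q j‖
                = ∑ j ∈ Finset.range k, r ^ (k - j) * ‖q j‖ := by
              rw [Finset.mul_sum]
              apply Finset.sum_congr rfl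
              intro j hj
              have hjk : j < k := Finset.mem_range.mp hj
              rw [← mul_assoc, ← pow_succ']
              congr 2
              omega
            rw [mul_add, hS]
            ring
        _ = r ^ (k + 1) * ‖z 0 - zstar‖
            + ∑ j ∈ Finset.range (k + 1), r ^ (k - j) * ‖q j‖ := by
            rw [Finset.sum_range_succ]
            simp
  intro k hk
  have hne : (Finset.range k).Nonempty := Finset.nonempty_range_iff.mpr (by omega)
  set Q := (Finset.range k).sup' hne (fun j => ‖q j‖) with hQ
  have hQ0 : 0 ≤ Q := le_trans (norm_nonneg (q 0))
    (Finset.le_sup' (fun j => ‖q j‖) (Finset.mem_range.mpr (show 0 < k by omega)))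
  have hgeo : ∑ i ∈ Finset.range k, r ^ i ≤ 1 / (1 - r) := by
    have h1r : (0:ℝ) < 1 - r := by linarith
    rw [le_div_iff₀ h1r]
    have hgm := geom_sum_mul r k
    have hpk : (0:ℝ) ≤ r ^ k := pow_nonneg hr0 k
    nlinarith [hgm, hpk]
  have hsum : ∑ j ∈ Finset.range k, r ^ (k - 1 - j) * ‖q j‖ ≤ 1 / (1 - r) * Q := by
    calc ∑ j ∈ Finset.range k, r ^ (k - 1 - j) * ‖q j‖
        ≤ ∑ j ∈ Finset.range k, r ^ (k - 1 - j) * Q := by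
          apply Finset.sum_le_sum
          intro j hj
          exact mul_le_mul_of_nonneg_left (Finset.le_sup' (fun j => ‖q j‖) hj)
            (pow_nonneg hr0 _)
      _ = (∑ j ∈ Finset.range k, r ^ (k - 1 - j)) * Q := by rw [Finset.sum_mul]
      _ = (∑ i ∈ Finset.range k, r ^ i) * Q := by
          rw [Finset.sum_range_reflect (fun i => r ^ i) k]
      _ ≤ 1 / (1 - r) * Q := mul_le_mul_of_nonneg_right hgeo hQ0
  have hrpow : (1 - c) ^ ((k : ℝ) / 2) = r ^ k := by
    rw [show ((k : ℝ) / 2) = (1/2 : ℝ) * k by ring, Real.rpow_mul h1c,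
      Real.rpow_natCast, hr, Real.sqrt_eq_rpow]
  rw [hrpow]
  calc ‖z k - zstar‖ ≤ r ^ k * ‖z 0 - zstar‖ + ∑ j ∈ Finset.range k, r ^ (k - 1 - j) * ‖q j‖ :=
        hind k
    _ ≤ r ^ k * ‖z 0 - zstar‖ + 1 / (1 - r) * Q := add_le_add_right hsum _


/-- Perturbed gradient descent on a strongly convex function inherits the
exponential decay rate up to a neighbourhood (deterministic core of Theorem 3). -/
theorem stmt_6 {n : ℕ} (f : EuclideanSpace ℝ (Fin n) → ℝ) (β L₁ h c : ℝ)
    (hβ : 0 < β) (hL₁ : 0 < L₁) (hdiff : Differentiable ℝ f)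
    (hsc : ∀ x y, f y ≥ f x + ⟪gradient f x, y - x⟫ + β / 2 * ‖y - x‖ ^ 2)
    (hlip : ∀ x y, ‖gradient f x - gradient f y‖ ≤ L₁ * ‖x - y‖)
    (zstar : EuclideanSpace ℝ (Fin n)) (hmin : ∀ x, f zstar ≤ f x)
    (hh0 : 0 < h) (hh : h ≤ 2 / (β + L₁))
    (hc : c = 2 * h * β * L₁ / (β + L₁))
    (q z : ℕ → EuclideanSpace ℝ (Fin n))
    (hz : ∀ k, z (k + 1) = z k - h • gradient f (z k) + q k) :
    ∀ k : ℕ, ∀ _hk : 1 ≤ k,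
      ‖z k - zstar‖ ≤ (1 - c) ^ ((k : ℝ) / 2) * ‖z 0 - zstar‖ +
        1 / (1 - Real.sqrt (1 - c)) *
          (Finset.range k).sup' (Finset.nonempty_range_iff.mpr (by omega))
            (fun j => ‖q j‖) := by
  have hβL : (0:ℝ) < β + L₁ := by linarith
  have hdesc := descent_aux f L₁ hL₁.le hdiff hlip
  have hcoco := coco_aux f β L₁ hβ hL₁ hsc hlip hdesc
  have hgz := gradzero_aux f hdiff zstar hmin
  have hcontr := contraction_aux f β L₁ h c hβ hL₁ hcoco zstar hgz hh0 hh hc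
  have h1c : 0 ≤ 1 - c := by
    rw [hc, sub_nonneg, div_le_one hβL]
    have hD : 2 / (β + L₁) * (β + L₁) = 2 := div_mul_cancel₀ _ (ne_of_gt hβL)
    nlinarith [sq_nonneg (β - L₁), mul_pos hβ hL₁, hβL, hD, mul_le_mul_of_nonneg_left hh
      (by positivity : (0:ℝ) ≤ 2 * β * L₁)]
  exact stmt_6_aux f β L₁ h c hβ hL₁ hdiff hsc hlip zstar hmin hh0 hh hc q z hz hcontr h1c
end

section
/- Let α : [0,∞) → [0,∞) be a class-K∞ function. Then there exists a class-K∞ function α̂ such that α̂(r) ≤ α(r) for all r ≥ 0 and the function r ↦ r − α̂(r) is of class K. -/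
open Set Filter

/-- For any class-K∞ function there is a smaller class-K∞ function `α̂` with
`Id − α̂` of class K (Lemma B.1 of Jiang–Wang). -/
theorem stmt_18 (α : ℝ → ℝ) (hα : ClassKInf α) :
    ∃ αhat : ℝ → ℝ, ClassKInf αhat ∧ (∀ r ≥ (0 : ℝ), αhat r ≤ α r) ∧
      ClassK (fun r => r - αhat r) := by
  obtain ⟨⟨hc, hm, h0⟩, htop⟩ := hα
  have hnn : ∀ s : ℝ, 0 ≤ s → 0 ≤ α s := by
    intro s hs
    rcases eq_or_lt_of_le hs with h | h
    · simp [← h, h0]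
    · have := hm self_mem_Ici hs h
      linarith [h0 ▸ this]
  set g : ℝ → ℝ := fun r => sInf ((fun s => α s + (r - s)) '' Icc 0 r) with hgdef
  have hconts : ∀ r : ℝ, ContinuousOn (fun s => α s + (r - s)) (Icc 0 r) :=
    fun r => (hc.mono Icc_subset_Ici_self).add (continuousOn_const.sub continuousOn_id)
  have hK : ∀ r : ℝ, IsCompact ((fun s => α s + (r - s)) '' Icc 0 r) :=
    fun r => isCompact_Icc.image_of_continuousOn (hconts r)
  have hNe : ∀ r : ℝ, 0 ≤ r → ((fun s => α s + (r - s)) '' Icc 0 r).Nonempty :=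
    fun r hr => ⟨_, mem_image_of_mem _ (left_mem_Icc.2 hr)⟩
  have hle : ∀ r : ℝ, ∀ s ∈ Icc (0:ℝ) r, g r ≤ α s + (r - s) :=
    fun r s hs => csInf_le (hK r).bddBelow (mem_image_of_mem _ hs)
  have hmem : ∀ r : ℝ, 0 ≤ r → ∃ s ∈ Icc (0:ℝ) r, g r = α s + (r - s) := by
    intro r hr
    obtain ⟨s, hs, he⟩ := (hK r).sInf_mem (hNe r hr)
    exact ⟨s, hs, he.symm⟩
  have hg0 : g 0 = 0 := by
    simp [hgdef, Icc_self, h0]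
  have hgle : ∀ r : ℝ, 0 ≤ r → g r ≤ α r := by
    intro r hr
    have := hle r r (right_mem_Icc.2 hr)
    simpa using this
  have hgnn : ∀ r : ℝ, 0 ≤ r → 0 ≤ g r := by
    intro r hr
    obtain ⟨s, hs, he⟩ := hmem r hr
    have h1 := hnn s hs.1
    have h2 := hs.2
    rw [he]; linarith
  have key1 : ∀ r1 r2 : ℝ, 0 ≤ r1 → r1 ≤ r2 → g r2 ≤ g r1 + (r2 - r1) := by
    intro r1 r2 h1 h12
    obtain ⟨s, hs, he⟩ := hmem r1 h1
    have := hle r2 s ⟨hs.1, hs.2.trans h12⟩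
    linarith
  have key2 : ∀ r1 r2 : ℝ, 0 ≤ r1 → r1 < r2 → g r1 < g r2 := by
    intro r1 r2 h1 h12
    obtain ⟨s, hs, he⟩ := hmem r2 (by linarith)
    rcases le_or_gt s r1 with h | h
    · have := hle r1 s ⟨hs.1, h⟩
      linarith
    · have hα1 : α r1 < α s := hm h1 (h1.trans h.le) h
      have := hgle r1 h1
      have hs2 := hs.2
      linarith
  have hmono_g : ∀ r1 r2 : ℝ, 0 ≤ r1 → r1 ≤ r2 → g r1 ≤ g r2 := by
    intro r1 r2 h1 h12
    rcases eq_or_lt_of_le h12 with h | h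
    · rw [h]
    · exact (key2 r1 r2 h1 h).le
  have hlip : LipschitzOnWith 1 g (Ici 0) := by
    rw [lipschitzOnWith_iff_dist_le_mul]
    intro x hx y hy
    rw [Real.dist_eq, Real.dist_eq]
    push_cast
    rw [one_mul]
    rcases le_total x y with h | h
    · rw [abs_of_nonpos (by linarith [hmono_g x y hx h]),
        abs_of_nonpos (by linarith)]
      linarith [key1 x y hx h]
    · rw [abs_of_nonneg (by linarith [hmono_g y x hy h]),
        abs_of_nonneg (by linarith)]
      linarith [key1 y x hy h]
  have hglb : ∀ r : ℝ, 0 ≤ r → min (α (r/2)) (r/2) ≤ g r := by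
    intro r hr
    obtain ⟨s, hs, he⟩ := hmem r hr
    rcases le_total s (r/2) with h | h
    · refine (min_le_right _ _).trans ?_
      have := hnn s hs.1
      rw [he]; linarith
    · refine (min_le_left _ _).trans ?_
      have hmα : α (r/2) ≤ α s := by
        rcases eq_or_lt_of_le h with h' | h'
        · rw [h']
        · exact (hm (mem_Ici.2 (by linarith)) hs.1 h').le
      have := hs.2
      rw [he]; linarith
  have hgtop : Tendsto g atTop atTop := by
    have h1 : Tendsto (fun r : ℝ => α (r/2)) atTop atTop :=
      htop.comp (tendsto_atTop_atTop.2 fun b => ⟨2*b, fun a ha => by linarith⟩)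
    have h2 : Tendsto (fun r : ℝ => r/2) atTop atTop :=
      tendsto_atTop_atTop.2 fun b => ⟨2*b, fun a ha => by linarith⟩
    have hmin : Tendsto (fun r : ℝ => min (α (r/2)) (r/2)) atTop atTop := by
      rw [tendsto_atTop] at h1 h2 ⊢
      intro b
      filter_upwards [h1 b, h2 b] with r hr1 hr2
      exact le_min hr1 hr2
    exact tendsto_atTop_mono' atTop
      (by filter_upwards [eventually_ge_atTop (0:ℝ)] with r hr using hglb r hr) hmin
  refine ⟨fun r => g r / 2, ⟨⟨?_, ?_, ?_⟩, ?_⟩, ?_, ?_, ?_, ?_⟩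
  · exact hlip.continuousOn.div_const 2
  · intro x hx y hy hxy
    have := key2 x y hx hxy
    dsimp only; linarith
  · simp [hg0]
  · exact hgtop.atTop_div_const (by norm_num)
  · intro r hr
    have h1 := hgle r hr
    have h2 := hgnn r hr
    linarith
  · exact (continuousOn_id.sub (hlip.continuousOn.div_const 2))
  · intro x hx y hy hxy
    have := key1 x y hx hxy.le
    dsimp only; linarith
  · simp [hg0]
end
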